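/- For all real x with 0 < x < 2, the series P_k(x) = x * Σ_{l=1}^∞ l^k (1-x)^{l-1} satisfies the recursion P_0(x) = 1 and P_{k+1}(x) = (1/x) P_k(x) + (x-1) P_k'(x), where P_k' denotes the derivative of P_k. -/

import Mathlib

/-- The power series `P_k(x) = x * ∑_{l=1}^∞ l^k (1-x)^{l-1}`. -/
noncomputable def Pk (k : ℕ) (x : ℝ) : ℝ :=
  x * ∑' l : ℕ, ((l : ℝ) + 1) ^ k * (1 - x) ^ l

lemma sum_shift (c : ℝ) (k : ℕ) {r : ℝ} (hr : |r| < 1) :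
    Summable (fun n : ℕ => ((n : ℝ) + c) ^ k * r ^ n) := by
  have h : ∀ n : ℕ, ((n : ℝ) + c) ^ k * r ^ n =
      ∑ j ∈ Finset.range (k + 1), (c ^ (k - j) * (k.choose j)) * ((n : ℝ) ^ j * r ^ n) := by
    intro n
    rw [add_pow, Finset.sum_mul]
    exact Finset.sum_congr rfl fun j _ => by ring
  simp_rw [h]
  refine summable_sum fun j _ => Summable.mul_left _ ?_
  exact summable_pow_mul_geometric_of_norm_lt_one j (by simpa using hr)

lemma deriv_bound (k n : ℕ) {w r : ℝ} (hw : |w| ≤ r) :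
    ‖((n : ℝ) + 1) ^ k * ((n : ℝ) * w ^ (n - 1))‖ ≤
      ((n : ℝ) + 1) ^ k * ((n : ℝ) * r ^ (n - 1)) := by
  have hr0 : 0 ≤ r := le_trans (abs_nonneg w) hw
  rw [Real.norm_eq_abs, abs_mul, abs_mul, abs_pow, abs_pow]
  have h1 : |(n : ℝ) + 1| = (n : ℝ) + 1 := abs_of_nonneg (by positivity)
  have h2 : |(n : ℝ)| = (n : ℝ) := abs_of_nonneg (by positivity)
  rw [h1, h2]
  gcongr

lemma sum_deriv (k : ℕ) {r : ℝ} (hr : |r| < 1) :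
    Summable (fun n : ℕ => ((n : ℝ) + 1) ^ k * ((n : ℝ) * r ^ (n - 1))) := by
  rw [← summable_nat_add_iff 1]
  have habs : |(|r|)| < 1 := by simpa using hr
  refine Summable.of_norm_bounded (g := fun n : ℕ => ((n : ℝ) + 2) ^ (k + 1) * |r| ^ n)
    (sum_shift 2 (k + 1) habs) ?_
  intro n
  simp only [Nat.add_sub_cancel]
  push_cast
  rw [Real.norm_eq_abs, abs_mul, abs_mul, abs_pow, abs_pow]
  have h1 : |(n : ℝ) + 1 + 1| = (n : ℝ) + 2 := by
    rw [abs_of_nonneg (by positivity)]; ring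
  have h2 : |(n : ℝ) + 1| = (n : ℝ) + 1 := abs_of_nonneg (by positivity)
  rw [h1, h2, pow_succ]
  have hn1 : ((n : ℝ) + 1) ≤ (n : ℝ) + 2 := by linarith
  calc ((n : ℝ) + 2) ^ k * (((n : ℝ) + 1) * |r| ^ n)
      ≤ ((n : ℝ) + 2) ^ k * (((n : ℝ) + 2) * |r| ^ n) := by gcongr
    _ = ((n : ℝ) + 2) ^ k * ((n : ℝ) + 2) * |r| ^ n := by ring

lemma hasDeriv_g (k : ℕ) {y : ℝ} (hy : |y| < 1) :
    HasDerivAt (fun t : ℝ => ∑' l : ℕ, ((l : ℝ) + 1) ^ k * t ^ l)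
      (∑' l : ℕ, ((l : ℝ) + 1) ^ k * ((l : ℝ) * y ^ (l - 1))) y := by
  set r : ℝ := (1 + |y|) / 2 with hrdef
  have hy0 : 0 ≤ |y| := abs_nonneg y
  have hr1 : r < 1 := by rw [hrdef]; linarith
  have hyr : |y| < r := by rw [hrdef]; linarith
  have hrabs : |r| < 1 := by
    rw [abs_of_nonneg (by rw [hrdef]; linarith)]; exact hr1
  refine hasDerivAt_tsum_of_isPreconnected
    (u := fun n : ℕ => ((n : ℝ) + 1) ^ k * ((n : ℝ) * r ^ (n - 1)))
    (g := fun n t => ((n : ℝ) + 1) ^ k * t ^ n)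
    (g' := fun n t => ((n : ℝ) + 1) ^ k * ((n : ℝ) * t ^ (n - 1))) (y₀ := y)
    (sum_deriv k hrabs) (Metric.isOpen_ball (x := (0 : ℝ)) (ε := r))
    ((convex_ball (0:ℝ) r).isPreconnected) ?_ ?_ ?_ ?_ ?_
  · intro n t _
    simpa using (hasDerivAt_pow n t).const_mul (((n : ℝ) + 1) ^ k)
  · intro n t ht
    rw [Metric.mem_ball, Real.dist_eq, sub_zero] at ht
    exact deriv_bound k n ht.le
  · exact (Metric.mem_ball).2 (by rw [Real.dist_eq, sub_zero]; exact hyr)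
  · exact sum_shift 1 k (by simpa using hy)
  · exact (Metric.mem_ball).2 (by rw [Real.dist_eq, sub_zero]; exact hyr)

theorem stmt1 (k : ℕ) (x : ℝ) (hx0 : 0 < x) (hx2 : x < 2) :
    Pk 0 x = 1 ∧
    Pk (k + 1) x = (1 / x) * Pk k x + (x - 1) * deriv (Pk k) x := by
  set y : ℝ := 1 - x with hydef
  have hy : |y| < 1 := by rw [hydef, abs_lt]; constructor <;> linarith
  have hx : x ≠ 0 := ne_of_gt hx0
  constructor
  · show x * ∑' l : ℕ, ((l : ℝ) + 1) ^ 0 * (1 - x) ^ l = 1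
    simp only [pow_zero, one_mul]
    rw [tsum_geometric_of_norm_lt_one (by simpa using hy)]
    rw [show (1 : ℝ) - (1 - x) = x by ring]
    field_simp
  · -- derivative computation
    have hS : ∀ m : ℕ, Summable (fun l : ℕ => ((l : ℝ) + 1) ^ m * y ^ l) :=
      fun m => sum_shift 1 m hy
    have hT : Summable (fun l : ℕ => ((l : ℝ) + 1) ^ k * ((l : ℝ) * y ^ (l - 1))) :=
      sum_deriv k hy
    set S : ℝ := ∑' l : ℕ, ((l : ℝ) + 1) ^ k * y ^ l with hSdef
    set T : ℝ := ∑' l : ℕ, ((l : ℝ) + 1) ^ k * ((l : ℝ) * y ^ (l - 1)) with hTdef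
    -- derivative of Pk k at x
    have hg := hasDeriv_g k hy
    have hinner : HasDerivAt (fun x' : ℝ => (1 : ℝ) - x') (0 - 1) x :=
      (hasDerivAt_const x 1).sub (hasDerivAt_id x)
    have hcomp : HasDerivAt (fun x' : ℝ => ∑' l : ℕ, ((l : ℝ) + 1) ^ k * (1 - x') ^ l)
        (T * (0 - 1)) x := by
      exact HasDerivAt.comp x (by simpa [hydef] using hg) hinner
    have hP : HasDerivAt (Pk k) (1 * (∑' l : ℕ, ((l : ℝ) + 1) ^ k * (1 - x) ^ l)
        + x * (T * (0 - 1))) x := by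
      exact (hasDerivAt_id x).mul hcomp
    have hderiv : deriv (Pk k) x = S - x * T := by
      rw [hP.deriv, hSdef, hydef]; ring
    -- the tsum identity : S_{k+1} = S_k + y * T
    have hkey : (∑' l : ℕ, ((l : ℝ) + 1) ^ (k + 1) * y ^ l) = S + y * T := by
      rw [hSdef, hTdef, ← tsum_mul_left, ← Summable.tsum_add (hS k) (hT.mul_left y)]
      refine tsum_congr fun l => ?_
      cases l with
      | zero => norm_num
      | succ m =>
        simp only [Nat.add_sub_cancel]
        push_cast
        rw [pow_succ ((m : ℝ) + 1 + 1) k, pow_succ y m]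
        ring
    show x * ∑' l : ℕ, ((l : ℝ) + 1) ^ (k + 1) * (1 - x) ^ l
        = (1 / x) * Pk k x + (x - 1) * deriv (Pk k) x
    rw [hderiv, show Pk k x = x * S by rw [hSdef, hydef]; rfl,
      show ∑' l : ℕ, ((l : ℝ) + 1) ^ (k + 1) * (1 - x) ^ l
        = ∑' l : ℕ, ((l : ℝ) + 1) ^ (k + 1) * y ^ l by rw [hydef], hkey, hydef]
    field_simp
    ring
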